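/- Let m, n be positive integers. Let φ : M_{mn}(ℂ) → M_{mn}(ℂ) be a linear RT-Hermitian map, i.e. tr(φ(A)·B) equals the complex conjugate of tr(φ(B̄)·Ā) for all A, B ∈ M_{mn}(ℂ), where X̄ denotes entrywise complex conjugation. Then tr(φ(A ⊕ B)) = tr(A ⊕ B) for all A ∈ M_m(ℂ) and B ∈ M_n(ℂ) if and only if tr₁(φ(I_{mn})) = m·I_n and tr₂(φ(I_{mn})) = n·I_m. -/

import Mathlib

open Matrix Kronecker BigOperators

/-- The Kronecker sum `A ⊕ B = A ⊗ Iₙ + Iₘ ⊗ B`. -/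
def kronSum {F : Type*} [CommRing F] {m n : ℕ}
    (A : Matrix (Fin m) (Fin m) F) (B : Matrix (Fin n) (Fin n) F) :
    Matrix (Fin m × Fin n) (Fin m × Fin n) F :=
  A ⊗ₖ (1 : Matrix (Fin n) (Fin n) F) + (1 : Matrix (Fin m) (Fin m) F) ⊗ₖ B

/-- The first partial trace `tr₁(P) = Σⱼ Pⱼⱼ` (sum of the diagonal blocks). -/
def ptrace1 {F : Type*} [AddCommMonoid F] {m n : ℕ}
    (P : Matrix (Fin m × Fin n) (Fin m × Fin n) F) :
    Matrix (Fin n) (Fin n) F :=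
  Matrix.of fun a b => ∑ k : Fin m, P (k, a) (k, b)

/-- The second partial trace `tr₂(P) = Σ_{k,l} tr(P_{kl}) E_{kl}` (blockwise trace). -/
def ptrace2 {F : Type*} [AddCommMonoid F] {m n : ℕ}
    (P : Matrix (Fin m × Fin n) (Fin m × Fin n) F) :
    Matrix (Fin m) (Fin m) F :=
  Matrix.of fun k l => ∑ a : Fin n, P (k, a) (l, a)

lemma aux_trace_mul_std {k : ℕ} (M : Matrix (Fin k) (Fin k) ℂ) (i j : Fin k) :
    (M * single i j (1:ℂ)).trace = M j i := by
  simp [Matrix.trace, Matrix.mul_apply, Matrix.single, Matrix.diag, ite_and]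

lemma aux_L2 {m n : ℕ} (P : Matrix (Fin m × Fin n) (Fin m × Fin n) ℂ)
    (X : Matrix (Fin m) (Fin m) ℂ) :
    (P * (X ⊗ₖ (1 : Matrix (Fin n) (Fin n) ℂ))).trace = (ptrace2 P * X).trace := by
  simp only [Matrix.trace, Matrix.mul_apply, Matrix.diag, ptrace2, Matrix.of_apply,
    Fintype.sum_prod_type, Matrix.kroneckerMap_apply, Matrix.one_apply, mul_ite, mul_one,
    mul_zero, Finset.sum_ite_eq, Finset.sum_ite_eq', Finset.mem_univ, if_true,
    Finset.sum_mul]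
  exact Finset.sum_congr rfl fun k _ => Finset.sum_comm

lemma aux_L1 {m n : ℕ} (P : Matrix (Fin m × Fin n) (Fin m × Fin n) ℂ)
    (Y : Matrix (Fin n) (Fin n) ℂ) :
    (P * ((1 : Matrix (Fin m) (Fin m) ℂ) ⊗ₖ Y)).trace = (ptrace1 P * Y).trace := by
  simp only [Matrix.trace, Matrix.mul_apply, Matrix.diag, ptrace1, Matrix.of_apply,
    Fintype.sum_prod_type, Matrix.kroneckerMap_apply, Matrix.one_apply, mul_ite, mul_one,
    mul_zero, ite_mul, one_mul, zero_mul, Finset.sum_ite_eq, Finset.sum_ite_eq',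
    Finset.mem_univ, if_true, Finset.sum_mul]
  trans (∑ x : Fin m, ∑ x1 : Fin n, ∑ x3 : Fin n, ∑ x2 : Fin m,
      if x2 = x then P (x, x1) (x2, x3) * Y x3 x1 else 0)
  · exact Finset.sum_congr rfl fun _ _ => Finset.sum_congr rfl fun _ _ => Finset.sum_comm
  simp only [Finset.sum_ite_eq', Finset.mem_univ, if_true]
  rw [Finset.sum_comm]
  exact Finset.sum_congr rfl fun _ _ => Finset.sum_comm

lemma aux_map_kronSum {m n : ℕ} (X : Matrix (Fin m) (Fin m) ℂ)
    (Y : Matrix (Fin n) (Fin n) ℂ) :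
    (kronSum X Y).map (starRingEnd ℂ) =
      kronSum (X.map (starRingEnd ℂ)) (Y.map (starRingEnd ℂ)) := by
  ext ⟨k, a⟩ ⟨l, b⟩
  simp only [kronSum, Matrix.map_apply, Matrix.add_apply, Matrix.kroneckerMap_apply,
    Matrix.one_apply, map_add, _root_.map_mul, apply_ite, RingHom.map_one, RingHom.map_zero,
    mul_one, mul_zero]

lemma aux_trace_kronSum {m n : ℕ} (X : Matrix (Fin m) (Fin m) ℂ)
    (Y : Matrix (Fin n) (Fin n) ℂ) :
    (kronSum X Y).trace = (n : ℂ) * X.trace + (m : ℂ) * Y.trace := by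
  simp [kronSum, Matrix.trace, Matrix.diag, Fintype.sum_prod_type, Finset.sum_add_distrib,
    Finset.mul_sum, mul_comm]

lemma aux_trace_map {k : ℕ} (M : Matrix (Fin k) (Fin k) ℂ) :
    (M.map (starRingEnd ℂ)).trace = (starRingEnd ℂ) M.trace := by
  simp [Matrix.trace, Matrix.diag, Matrix.map_apply, map_sum]

lemma aux_map_std {k : ℕ} (i j : Fin k) :
    (single i j (1:ℂ)).map (starRingEnd ℂ) = single i j (1:ℂ) := by
  ext a b
  simp [Matrix.single, Matrix.map_apply, apply_ite]

/-- An RT-Hermitian linear map `φ` on complex matrices (i.e.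
`tr(φ(A)B) = conj(tr(φ(B̄)Ā))` for all `A, B`, where `X̄` is entrywise conjugation)
preserves the trace of all Kronecker sums iff
`tr₁(φ(I)) = m·Iₙ` and `tr₂(φ(I)) = n·Iₘ`. -/
theorem trace_kronSum_preserved_iff_of_rt_hermitian
    {m n : ℕ} (hm : 0 < m) (hn : 0 < n)
    (φ : Matrix (Fin m × Fin n) (Fin m × Fin n) ℂ →ₗ[ℂ]
         Matrix (Fin m × Fin n) (Fin m × Fin n) ℂ)
    (hherm : ∀ A B : Matrix (Fin m × Fin n) (Fin m × Fin n) ℂ,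
        (φ A * B).trace =
          (starRingEnd ℂ)
            ((φ (B.map (starRingEnd ℂ)) * A.map (starRingEnd ℂ)).trace)) :
    (∀ (X : Matrix (Fin m) (Fin m) ℂ) (Y : Matrix (Fin n) (Fin n) ℂ),
        (φ (kronSum X Y)).trace = (kronSum X Y).trace) ↔
      (ptrace1 (φ 1) = (m : ℂ) • (1 : Matrix (Fin n) (Fin n) ℂ) ∧
       ptrace2 (φ 1) = (n : ℂ) • (1 : Matrix (Fin m) (Fin m) ℂ)) := by
  have hone : (1 : Matrix (Fin m × Fin n) (Fin m × Fin n) ℂ).map (starRingEnd ℂ) = 1 := by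
    ext i j
    simp [Matrix.one_apply, Matrix.map_apply, apply_ite]
  have hφtr : ∀ A : Matrix (Fin m × Fin n) (Fin m × Fin n) ℂ,
      (φ A).trace = (starRingEnd ℂ) ((φ 1 * A.map (starRingEnd ℂ)).trace) := by
    intro A
    have := hherm A 1
    rwa [mul_one, hone] at this
  have key : ∀ (X : Matrix (Fin m) (Fin m) ℂ) (Y : Matrix (Fin n) (Fin n) ℂ),
      (φ (kronSum X Y)).trace =
        (starRingEnd ℂ) ((ptrace2 (φ 1) * X.map (starRingEnd ℂ)).trace
          + (ptrace1 (φ 1) * Y.map (starRingEnd ℂ)).trace) := by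
    intro X Y
    rw [hφtr, aux_map_kronSum]
    congr 1
    rw [kronSum, mul_add, Matrix.trace_add, aux_L2, aux_L1]
  constructor
  · intro h
    constructor
    · -- ptrace1
      ext a b
      have h0 : ∀ Y : Matrix (Fin n) (Fin n) ℂ,
          (starRingEnd ℂ) ((ptrace1 (φ 1) * Y.map (starRingEnd ℂ)).trace)
            = (m : ℂ) * Y.trace := by
        intro Y
        have := (key 0 Y).symm.trans ((h 0 Y).trans (aux_trace_kronSum 0 Y))
        simpa [Matrix.map_zero] using this
      have := h0 (single b a 1)
      rw [aux_map_std, aux_trace_mul_std] at this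
      have hval : ptrace1 (φ 1) a b = (starRingEnd ℂ) ((m : ℂ) * (single b a (1:ℂ)).trace) := by
        rw [← this, Complex.conj_conj]
      rw [hval]
      by_cases hab : a = b
      · subst hab
        simp [Matrix.trace_single_eq_same, Matrix.smul_apply, Matrix.one_apply]
      · rw [Matrix.trace_single_eq_of_ne b a (1:ℂ) (Ne.symm hab)]
        simp [Matrix.smul_apply, Matrix.one_apply, hab]
    · -- ptrace2
      ext k l
      have h0 : ∀ X : Matrix (Fin m) (Fin m) ℂ,
          (starRingEnd ℂ) ((ptrace2 (φ 1) * X.map (starRingEnd ℂ)).trace)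
            = (n : ℂ) * X.trace := by
        intro X
        have := (key X 0).symm.trans ((h X 0).trans (aux_trace_kronSum X 0))
        simpa [Matrix.map_zero] using this
      have := h0 (single l k 1)
      rw [aux_map_std, aux_trace_mul_std] at this
      have hval : ptrace2 (φ 1) k l = (starRingEnd ℂ) ((n : ℂ) * (single l k (1:ℂ)).trace) := by
        rw [← this, Complex.conj_conj]
      rw [hval]
      by_cases hkl : k = l
      · subst hkl
        simp [Matrix.trace_single_eq_same, Matrix.smul_apply, Matrix.one_apply]
      · rw [Matrix.trace_single_eq_of_ne l k (1:ℂ) (Ne.symm hkl)]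
        simp [Matrix.smul_apply, Matrix.one_apply, hkl]
  · rintro ⟨h1, h2⟩ X Y
    rw [key, h1, h2, Matrix.smul_mul, Matrix.smul_mul, one_mul, one_mul,
      Matrix.trace_smul, Matrix.trace_smul, aux_trace_map, aux_trace_map,
      aux_trace_kronSum]
    simp only [smul_eq_mul, map_add, RingHom.map_mul, Complex.conj_conj, map_natCast]
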